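/- For a one-qubit dephasing channel with function f (|f| ≤ 1), the superfidelity between the Jamiołkowski states of D_f and D_{f̄} equals 1 - (|f|² - Re(f²))/2. -/

import Mathlib

open Matrix

noncomputable def sG {N : ℕ} (ρ σ : Matrix (Fin N) (Fin N) ℂ) : ℝ :=
  (trace (ρ * σ)).re +
    Real.sqrt (1 - (trace (ρ * ρ)).re) * Real.sqrt (1 - (trace (σ * σ)).re)

/-- Jamiołkowski state of the one-qubit dephasing channel D_f. -/
noncomputable def dephJam (f : ℂ) : Matrix (Fin 4) (Fin 4) ℂ :=
  ((1 : ℂ) / 2) • !![1, 0, 0, f; 0, 0, 0, 0; 0, 0, 0, 0; star f, 0, 0, 1]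

theorem superfidelity_dephasing_conj (f : ℂ) (hf : ‖f‖ ≤ 1) :
    sG (dephJam f) (dephJam (star f)) =
      1 - (‖f‖ ^ 2 - (f ^ 2).re) / 2 := by
  have habs : ‖f‖ ^ 2 = f.re ^ 2 + f.im ^ 2 := by
    rw [Complex.sq_norm, Complex.normSq_apply]; ring
  have h1 : (trace (dephJam f * dephJam (star f))).re = (1 + (f ^ 2).re) / 2 := by
    simp [dephJam, trace, Matrix.mul_apply, Fin.sum_univ_four, Complex.ext_iff,
      Complex.add_re, Complex.mul_re, Complex.mul_im, pow_two, Matrix.vecHead, Matrix.vecTail]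
    ring
  have h2 : (trace (dephJam f * dephJam f)).re = (1 + ‖f‖ ^ 2) / 2 := by
    simp [dephJam, trace, Matrix.mul_apply, Fin.sum_univ_four,
      Complex.add_re, Complex.mul_re, Complex.mul_im, habs, Matrix.vecHead, Matrix.vecTail]
    ring
  have h3 : (trace (dephJam (star f) * dephJam (star f))).re = (1 + ‖f‖ ^ 2) / 2 := by
    simp [dephJam, trace, Matrix.mul_apply, Fin.sum_univ_four,
      Complex.add_re, Complex.mul_re, Complex.mul_im, habs, Matrix.vecHead, Matrix.vecTail]
    ring
  have hle : ‖f‖ ^ 2 ≤ 1 := by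
    nlinarith [norm_nonneg f]
  have hs : Real.sqrt (1 - (1 + ‖f‖ ^ 2) / 2) *
      Real.sqrt (1 - (1 + ‖f‖ ^ 2) / 2) = 1 - (1 + ‖f‖ ^ 2) / 2 := by
    exact Real.mul_self_sqrt (by linarith)
  rw [sG, h1, h2, h3, hs]
  ring
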